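/- arXiv:0807.2108 — 2 statements merged into one kernel-verified Lean document; each statement's English description precedes it below -/
import Mathlib

section
/- Stability of the d-continuity method for 1/2 < γ ≤ 1: under the d-continuity domain decomposition method with linearly independent constraints and trapezoidal parameter 1/2 < γ ≤ 1, all quantities at integer time levels are bounded: there exists a constant C > 0 such that for all i ∈ {1,…,S} and all n ∈ ℕ, ‖d_i(n)‖ ≤ C, ‖v_i(n)‖ ≤ C, and ‖λ(n)‖ ≤ C. -/
open Matrix

/-- The Euclidean norm of a vector indexed by `Fin k`. -/
noncomputable def enorm {k : ℕ} (x : Fin k → ℝ) : ℝ := Real.sqrt (x ⬝ᵥ x)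


lemma dot_self_nonneg' {k : ℕ} (x : Fin k → ℝ) : 0 ≤ x ⬝ᵥ x :=
  Finset.sum_nonneg fun _ _ => mul_self_nonneg _

lemma dot_symm {k : ℕ} {A : Matrix (Fin k) (Fin k) ℝ} (hA : Aᵀ = A) (x y : Fin k → ℝ) :
    x ⬝ᵥ A *ᵥ y = y ⬝ᵥ A *ᵥ x := by
  rw [Matrix.dotProduct_mulVec x A y, ← Matrix.vecMul_transpose, hA, dotProduct_comm]

lemma sum_dotProduct' {ι : Type*} [Fintype ι] {k : ℕ} (f : ι → (Fin k → ℝ)) (y : Fin k → ℝ) :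
    (∑ i, f i) ⬝ᵥ y = ∑ i, f i ⬝ᵥ y := by
  simp [dotProduct, Finset.sum_mul]; exact Finset.sum_comm

-- expansion simp set
lemma dm_add_r {k : ℕ} (A : Matrix (Fin k) (Fin k) ℝ) (x y z : Fin k → ℝ) :
    x ⬝ᵥ A *ᵥ (y + z) = x ⬝ᵥ A *ᵥ y + x ⬝ᵥ A *ᵥ z := by
  rw [Matrix.mulVec_add, dotProduct_add]
lemma dm_add_l {k : ℕ} (A : Matrix (Fin k) (Fin k) ℝ) (x y z : Fin k → ℝ) :
    (x + y) ⬝ᵥ A *ᵥ z = x ⬝ᵥ A *ᵥ z + y ⬝ᵥ A *ᵥ z := add_dotProduct _ _ _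
lemma dm_sub_r {k : ℕ} (A : Matrix (Fin k) (Fin k) ℝ) (x y z : Fin k → ℝ) :
    x ⬝ᵥ A *ᵥ (y - z) = x ⬝ᵥ A *ᵥ y - x ⬝ᵥ A *ᵥ z := by
  rw [Matrix.mulVec_sub, dotProduct_sub]
lemma dm_sub_l {k : ℕ} (A : Matrix (Fin k) (Fin k) ℝ) (x y z : Fin k → ℝ) :
    (x - y) ⬝ᵥ A *ᵥ z = x ⬝ᵥ A *ᵥ z - y ⬝ᵥ A *ᵥ z := sub_dotProduct _ _ _
lemma dm_smul_r {k : ℕ} (A : Matrix (Fin k) (Fin k) ℝ) (c : ℝ) (x y : Fin k → ℝ) :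
    x ⬝ᵥ A *ᵥ (c • y) = c * (x ⬝ᵥ A *ᵥ y) := by
  rw [Matrix.mulVec_smul, dotProduct_smul, smul_eq_mul]
lemma dm_smul_l {k : ℕ} (A : Matrix (Fin k) (Fin k) ℝ) (c : ℝ) (x y : Fin k → ℝ) :
    (c • x) ⬝ᵥ A *ᵥ y = c * (x ⬝ᵥ A *ᵥ y) := by
  rw [smul_dotProduct, smul_eq_mul]

lemma expandA {k : ℕ} (Mi Ki : Matrix (Fin k) (Fin k) ℝ) (hMs : Miᵀ = Mi)
    (γ Δt : ℝ) (a a2 : Fin k → ℝ) :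
    ((1-γ) • a + γ • a2) ⬝ᵥ (Mi *ᵥ (a2 - a) + Ki *ᵥ (Δt • ((1-γ) • a + γ • a2))) =
      (1/2) * (a2 ⬝ᵥ Mi *ᵥ a2 - a ⬝ᵥ Mi *ᵥ a)
      + ((γ - 1/2) * ((a2 - a) ⬝ᵥ Mi *ᵥ (a2 - a))
        + Δt * (((1-γ) • a + γ • a2) ⬝ᵥ Ki *ᵥ ((1-γ) • a + γ • a2))) := by
  simp only [Matrix.mulVec_add, Matrix.mulVec_sub, Matrix.mulVec_smul, dotProduct_add,
    dotProduct_sub, dotProduct_smul, add_dotProduct, sub_dotProduct,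
    smul_dotProduct, smul_eq_mul]
  simp only [dot_symm hMs a2 a]
  ring

lemma expandB {k : ℕ} (Mi Ki : Matrix (Fin k) (Fin k) ℝ) (hMs : Miᵀ = Mi) (hKs : Kiᵀ = Ki)
    (γ Δt : ℝ) (hΔt : Δt ≠ 0) (a a2 e : Fin k → ℝ) :
    ((1-γ) • a + γ • a2) ⬝ᵥ (Mi *ᵥ (a + a2) + Ki *ᵥ (e + (e + Δt • ((1-γ) • a + γ • a2)))) =
      (1/2) * ((a + a2) ⬝ᵥ Mi *ᵥ (a + a2))
      + ((γ - 1/2) * (a2 ⬝ᵥ Mi *ᵥ a2 - a ⬝ᵥ Mi *ᵥ a)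
        + (1/Δt) * ((e + Δt • ((1-γ) • a + γ • a2)) ⬝ᵥ Ki *ᵥ (e + Δt • ((1-γ) • a + γ • a2))
          - e ⬝ᵥ Ki *ᵥ e)) := by
  simp only [Matrix.mulVec_add, Matrix.mulVec_sub, Matrix.mulVec_smul, dotProduct_add,
    dotProduct_sub, dotProduct_smul, add_dotProduct, sub_dotProduct,
    smul_dotProduct, smul_eq_mul]
  simp only [dot_symm hMs a2 a, dot_symm hKs a e, dot_symm hKs a2 e, dot_symm hKs a2 a]
  field_simp
  ring

lemma expand_diff {k : ℕ} (Ki : Matrix (Fin k) (Fin k) ℝ) (hKs : Kiᵀ = Ki)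
    (hKpsd : Ki.PosSemidef) (x y : Fin k → ℝ) :
    (x - y) ⬝ᵥ Ki *ᵥ (x - y) ≤ 2 * (x ⬝ᵥ Ki *ᵥ x) + 2 * (y ⬝ᵥ Ki *ᵥ y) := by
  have h : 0 ≤ (x + y) ⬝ᵥ Ki *ᵥ (x + y) := by
    have := hKpsd.dotProduct_mulVec_nonneg (x + y); simpa using this
  simp only [Matrix.mulVec_add, Matrix.mulVec_sub, Matrix.mulVec_smul, dotProduct_add,
    dotProduct_sub, dotProduct_smul, add_dotProduct, sub_dotProduct,
    smul_dotProduct, smul_eq_mul] at h ⊢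
  simp only [dot_symm hKs y x] at h ⊢
  linarith

lemma psd_mulVec_eq_zero {k : ℕ} {A : Matrix (Fin k) (Fin k) ℝ} (hA : A.PosSemidef)
    {x : Fin k → ℝ} (h : x ⬝ᵥ A *ᵥ x = 0) : A *ᵥ x = 0 := by
  exact (Matrix.PosSemidef.dotProduct_mulVec_zero_iff hA x).mp (by simpa using h)

lemma quad_lower_bound {V : Type*} [NormedAddCommGroup V] [NormedSpace ℝ V]
    [FiniteDimensional ℝ V] (U : Submodule ℝ V) (f : V → ℝ) (hf : Continuous f)
    (hpos : ∀ x ∈ U, x ≠ 0 → 0 < f x)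
    (hhom : ∀ (t : ℝ) (x : V), 0 ≤ t → f (t • x) = t ^ 2 * f x) :
    ∃ c > 0, ∀ x ∈ U, c * ‖x‖ ^ 2 ≤ f x := by
  have hf0 : f 0 = 0 := by
    have := hhom 0 0 le_rfl; simpa using this
  by_cases hne : ∃ x : V, x ∈ U ∧ ‖x‖ = 1
  · set s : Set V := {x : V | x ∈ U ∧ ‖x‖ = 1} with hs
    have hcs : IsCompact s := by
      have : s = (Metric.sphere (0:V) 1) ∩ (U : Set V) := by
        ext x; simp [hs, Set.mem_inter_iff, and_comm, mem_sphere_iff_norm]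
      rw [this]
      exact (isCompact_sphere 0 1).inter_right (Submodule.closed_of_finiteDimensional U)
    obtain ⟨x₀, hx₀s, hmin⟩ := hcs.exists_isMinOn ⟨_, hne.choose_spec⟩ hf.continuousOn
    have hx₀ne : x₀ ≠ 0 := by
      intro h
      have h2 := hx₀s.2
      rw [h, norm_zero] at h2
      exact one_ne_zero h2.symm
    have hc : 0 < f x₀ := hpos x₀ hx₀s.1 hx₀ne
    refine ⟨f x₀, hc, fun x hxU => ?_⟩
    by_cases hx : x = 0
    · simp [hx, hf0]
    · have hxn : 0 < ‖x‖ := norm_pos_iff.2 hx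
      have hmem : (‖x‖⁻¹ • x) ∈ s := ⟨U.smul_mem _ hxU, by
        simp [norm_smul, abs_of_pos (inv_pos.2 hxn), inv_mul_cancel₀ hxn.ne']⟩
      have h1 : f x₀ ≤ f (‖x‖⁻¹ • x) := hmin hmem
      have h2 : f (‖x‖⁻¹ • x) = (‖x‖⁻¹) ^ 2 * f x := hhom _ _ (by positivity)
      rw [h2] at h1
      have := mul_le_mul_of_nonneg_left h1 (le_of_lt (pow_pos hxn 2))
      calc f x₀ * ‖x‖ ^ 2 = ‖x‖ ^ 2 * f x₀ := by ring
        _ ≤ ‖x‖ ^ 2 * ((‖x‖⁻¹) ^ 2 * f x) := this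
        _ = f x := by field_simp
  · refine ⟨1, one_pos, fun x hxU => ?_⟩
    have hx0 : x = 0 := by
      by_contra hx
      exact hne ⟨‖x‖⁻¹ • x, U.smul_mem _ hxU, by
        simp [norm_smul, abs_of_pos (inv_pos.2 (norm_pos_iff.2 hx)),
          inv_mul_cancel₀ (norm_pos_iff.2 hx).ne']⟩
    simp [hx0, hf0]



lemma dot_self_nonneg {k : ℕ} (x : Fin k → ℝ) : 0 ≤ x ⬝ᵥ x :=
  Finset.sum_nonneg fun j _ => mul_self_nonneg _

lemma enorm_eq {k : ℕ} (x : Fin k → ℝ) :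
    _root_.enorm x = ‖(WithLp.equiv 2 (Fin k → ℝ)).symm x‖ := by
  rw [EuclideanSpace.norm_eq]
  unfold _root_.enorm dotProduct
  congr 1
  refine Finset.sum_congr rfl fun j _ => ?_
  simp [Real.norm_eq_abs, sq_abs, sq]

lemma enorm_nonneg' {k : ℕ} (x : Fin k → ℝ) : 0 ≤ _root_.enorm x := Real.sqrt_nonneg _

lemma enorm_sq {k : ℕ} (x : Fin k → ℝ) : _root_.enorm x ^ 2 = x ⬝ᵥ x :=
  Real.sq_sqrt (dot_self_nonneg x)

lemma enorm_add_le_euc {k : ℕ} (x y : Fin k → ℝ) : _root_.enorm (x + y) ≤ _root_.enorm x + _root_.enorm y := by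
  rw [enorm_eq, enorm_eq, enorm_eq]
  exact norm_add_le _ _

lemma enorm_le_sqrt_card_mul_norm {k : ℕ} (x : Fin k → ℝ) :
    _root_.enorm x ≤ Real.sqrt k * ‖x‖ := by
  have h : x ⬝ᵥ x ≤ (k : ℝ) * ‖x‖ ^ 2 := by
    calc x ⬝ᵥ x = ∑ j, x j * x j := rfl
      _ ≤ ∑ _j : Fin k, ‖x‖ ^ 2 := by
          refine Finset.sum_le_sum fun j _ => ?_
          have := norm_le_pi_norm x j
          have h2 : |x j| ≤ ‖x‖ := by simpa [Real.norm_eq_abs] using this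
          nlinarith [abs_nonneg (x j), abs_mul_abs_self (x j)]
      _ = (k : ℝ) * ‖x‖ ^ 2 := by simp [Finset.sum_const, nsmul_eq_mul]
  calc _root_.enorm x = Real.sqrt (x ⬝ᵥ x) := rfl
    _ ≤ Real.sqrt ((k : ℝ) * ‖x‖ ^ 2) := Real.sqrt_le_sqrt h
    _ = Real.sqrt k * ‖x‖ := by
        rw [Real.sqrt_mul (by positivity), Real.sqrt_sq (norm_nonneg _)]

lemma enorm_mulVec_le {a b : ℕ} (A : Matrix (Fin a) (Fin b) ℝ) :
    ∃ c ≥ 0, ∀ x : Fin b → ℝ, _root_.enorm (A *ᵥ x) ≤ c * _root_.enorm x := by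
  let L : EuclideanSpace ℝ (Fin b) →ₗ[ℝ] EuclideanSpace ℝ (Fin a) := Matrix.toEuclideanLin A
  let Lc := LinearMap.toContinuousLinearMap L
  refine ⟨‖Lc‖, norm_nonneg _, fun x => ?_⟩
  have h := Lc.le_opNorm ((WithLp.equiv 2 (Fin b → ℝ)).symm x)
  have happ : Lc ((WithLp.equiv 2 (Fin b → ℝ)).symm x) = (WithLp.equiv 2 (Fin a → ℝ)).symm (A *ᵥ x) := by
    simp [Lc, L, Matrix.toEuclideanLin, Matrix.toLin'_apply]
  rw [happ] at h
  rw [enorm_eq, enorm_eq]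
  exact h

lemma enorm_component_le {S : ℕ} {nn : Fin S → ℕ} (x : ∀ i : Fin S, Fin (nn i) → ℝ) (i : Fin S) :
    _root_.enorm (x i) ≤ Real.sqrt (nn i) * ‖x‖ :=
  le_trans (enorm_le_sqrt_card_mul_norm _)
    (mul_le_mul_of_nonneg_left (norm_le_pi_norm x i) (Real.sqrt_nonneg _))

lemma psd_dot_nonneg {k : ℕ} {A : Matrix (Fin k) (Fin k) ℝ} (hA : A.PosSemidef)
    (x : Fin k → ℝ) : 0 ≤ x ⬝ᵥ A *ᵥ x := by
  have := hA.dotProduct_mulVec_nonneg x; simpa using this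

lemma pd_dot_pos {k : ℕ} {A : Matrix (Fin k) (Fin k) ℝ} (hA : A.PosDef)
    {x : Fin k → ℝ} (hx : x ≠ 0) : 0 < x ⬝ᵥ A *ᵥ x := by
  have := hA.dotProduct_mulVec_pos hx; simpa using this

lemma quad_bound_pi {S : ℕ} {nn : Fin S → ℕ}
    (U : Submodule ℝ (∀ i : Fin S, Fin (nn i) → ℝ))
    (f : (∀ i : Fin S, Fin (nn i) → ℝ) → ℝ) (hf : Continuous f)
    (hpos : ∀ x ∈ U, x ≠ 0 → 0 < f x)
    (hhom : ∀ (t : ℝ) (x : ∀ i : Fin S, Fin (nn i) → ℝ), 0 ≤ t → f (t • x) = t ^ 2 * f x) :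
    ∃ c > 0, ∀ x ∈ U, ∀ i, c * _root_.enorm (x i) ^ 2 ≤ (nn i : ℝ) * f x := by
  obtain ⟨c, hc, hle⟩ := quad_lower_bound U f hf hpos hhom
  refine ⟨c, hc, fun x hx i => ?_⟩
  have h1 : _root_.enorm (x i) ≤ Real.sqrt (nn i) * ‖x‖ := enorm_component_le x i
  have h2 : _root_.enorm (x i) ^ 2 ≤ (nn i : ℝ) * ‖x‖ ^ 2 := by
    calc _root_.enorm (x i)^2 ≤ (Real.sqrt (nn i) * ‖x‖)^2 :=
          pow_le_pow_left₀ (enorm_nonneg' _) h1 2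
      _ = (nn i : ℝ) * ‖x‖^2 := by rw [mul_pow, Real.sq_sqrt (Nat.cast_nonneg _)]
  have h3 := hle x hx
  calc c * _root_.enorm (x i)^2 ≤ c * ((nn i : ℝ) * ‖x‖^2) := mul_le_mul_of_nonneg_left h2 hc.le
    _ = (nn i : ℝ) * (c * ‖x‖^2) := by ring
    _ ≤ (nn i : ℝ) * f x := mul_le_mul_of_nonneg_left h3 (Nat.cast_nonneg _)

lemma quad_bound_vec {m : ℕ} (f : (Fin m → ℝ) → ℝ) (hf : Continuous f)
    (hpos : ∀ x : Fin m → ℝ, x ≠ 0 → 0 < f x)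
    (hhom : ∀ (t : ℝ) (x : Fin m → ℝ), 0 ≤ t → f (t • x) = t ^ 2 * f x) :
    ∃ c > 0, ∀ x, c * _root_.enorm x ^ 2 ≤ (m : ℝ) * f x := by
  obtain ⟨c, hc, hle⟩ := quad_lower_bound (⊤ : Submodule ℝ (Fin m → ℝ)) f hf
    (fun x _ hx => hpos x hx) hhom
  refine ⟨c, hc, fun x => ?_⟩
  have h1 : _root_.enorm x ≤ Real.sqrt m * ‖x‖ := enorm_le_sqrt_card_mul_norm x
  have h2 : _root_.enorm x ^ 2 ≤ (m : ℝ) * ‖x‖ ^ 2 := by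
    calc _root_.enorm x ^ 2 ≤ (Real.sqrt m * ‖x‖)^2 := pow_le_pow_left₀ (enorm_nonneg' _) h1 2
      _ = (m : ℝ) * ‖x‖^2 := by rw [mul_pow, Real.sq_sqrt (Nat.cast_nonneg _)]
  have h3 := hle x Submodule.mem_top
  calc c * _root_.enorm x ^ 2 ≤ c * ((m : ℝ) * ‖x‖^2) := mul_le_mul_of_nonneg_left h2 hc.le
    _ = (m : ℝ) * (c * ‖x‖^2) := by ring
    _ ≤ (m : ℝ) * f x := mul_le_mul_of_nonneg_left h3 (Nat.cast_nonneg _)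

/-- Stability of the d-continuity method for `1/2 < γ ≤ 1`: with linearly independent
constraints, the temperatures, rates and Lagrange multipliers at integer time levels
are all bounded uniformly in `i` and `n`. -/
theorem dContinuity_stable_for_gamma_gt_half
    (S m : ℕ) (hS : 1 ≤ S) (nn : Fin S → ℕ)
    (M K : ∀ i : Fin S, Matrix (Fin (nn i)) (Fin (nn i)) ℝ)
    (hM : ∀ i, (M i).PosDef) (hK : ∀ i, (K i).PosSemidef)
    (C : ∀ i : Fin S, Matrix (Fin m) (Fin (nn i)) ℝ)
    (Δt γ : ℝ) (hΔt : 0 < Δt) (hγ₀ : 1/2 < γ) (hγ₁ : γ ≤ 1)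
    (d v : ∀ i : Fin S, ℕ → (Fin (nn i) → ℝ)) (lam : ℕ → (Fin m → ℝ))
    (heq : ∀ i n, (M i).mulVec (v i n) + (K i).mulVec (d i n) = (C i)ᵀ.mulVec (lam n))
    (hupd : ∀ i n, d i (n + 1) = d i n + Δt • ((1 - γ) • v i n + γ • v i (n + 1)))
    (hcont : ∀ n, ∑ i : Fin S, (C i).mulVec (d i n) = 0)
    (hind : ∀ μ : Fin m → ℝ, (∀ i, (C i)ᵀ.mulVec μ = 0) → μ = 0) :
    ∃ C₀ > (0 : ℝ), ∀ i : Fin S, ∀ n : ℕ,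
      _root_.enorm (d i n) ≤ C₀ ∧ _root_.enorm (v i n) ≤ C₀ ∧ _root_.enorm (lam n) ≤ C₀ := by
  have hMsym : ∀ i, (M i)ᵀ = M i := fun i => by have := (hM i).1; simpa [Matrix.IsHermitian] using this
  have hKsym : ∀ i, (K i)ᵀ = K i := fun i => by have := (hK i).1; simpa [Matrix.IsHermitian] using this
  have hγh : (0:ℝ) ≤ γ - 1/2 := by linarith
  have hΔt' : Δt ≠ 0 := ne_of_gt hΔt
  -- the increment direction
  set w : ∀ i : Fin S, ℕ → (Fin (nn i) → ℝ) := fun i n => (1 - γ) • v i n + γ • v i (n+1) with hwdef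
  have hupd' : ∀ i n, d i (n+1) = d i n + Δt • w i n := fun i n => hupd i n
  -- constraints on increments
  have hCw : ∀ n, ∑ i, (C i) *ᵥ (w i n) = 0 := by
    intro n
    have h1 := hcont (n+1)
    have h2 : ∑ i, (C i) *ᵥ (d i n + Δt • w i n) = 0 := by
      rw [← h1]; exact Finset.sum_congr rfl fun i _ => by rw [← hupd' i n]
    simp only [Matrix.mulVec_add, Matrix.mulVec_smul, Finset.sum_add_distrib,
      ← Finset.smul_sum] at h2
    rw [hcont n, zero_add, smul_eq_zero] at h2
    exact h2.resolve_left hΔt'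
  -- difference of subdomain equations
  have hsub : ∀ i n, (M i) *ᵥ (v i (n+1) - v i n) + (K i) *ᵥ (Δt • w i n)
      = (C i)ᵀ *ᵥ (lam (n+1) - lam n) := by
    intro i n
    have hdw : Δt • w i n = d i (n+1) - d i n := by rw [hupd' i n]; abel
    rw [hdw, Matrix.mulVec_sub, Matrix.mulVec_sub, Matrix.mulVec_sub, ← heq i n, ← heq i (n+1)]
    abel
  -- sum of subdomain equations
  have hmean : ∀ i n, (M i) *ᵥ (v i n + v i (n+1)) + (K i) *ᵥ (d i n + d i (n+1))
      = (C i)ᵀ *ᵥ (lam n + lam (n+1)) := by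
    intro i n
    rw [Matrix.mulVec_add, Matrix.mulVec_add, Matrix.mulVec_add, ← heq i n, ← heq i (n+1)]
    abel
  -- the two vanishing weighted sums
  have hz1 : ∀ n, ∑ i, w i n ⬝ᵥ ((M i) *ᵥ (v i (n+1) - v i n) + (K i) *ᵥ (Δt • w i n)) = 0 := by
    intro n
    calc ∑ i, w i n ⬝ᵥ ((M i) *ᵥ (v i (n+1) - v i n) + (K i) *ᵥ (Δt • w i n))
        = ∑ i, ((C i) *ᵥ w i n) ⬝ᵥ (lam (n+1) - lam n) := by
          refine Finset.sum_congr rfl fun i _ => ?_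
          rw [hsub i n, Matrix.dotProduct_mulVec, Matrix.vecMul_transpose]
      _ = (∑ i, (C i) *ᵥ w i n) ⬝ᵥ (lam (n+1) - lam n) := (sum_dotProduct' _ _).symm
      _ = 0 := by rw [hCw n, zero_dotProduct]
  have hz2 : ∀ n, ∑ i, w i n ⬝ᵥ ((M i) *ᵥ (v i n + v i (n+1)) + (K i) *ᵥ (d i n + d i (n+1))) = 0 := by
    intro n
    calc ∑ i, w i n ⬝ᵥ ((M i) *ᵥ (v i n + v i (n+1)) + (K i) *ᵥ (d i n + d i (n+1)))
        = ∑ i, ((C i) *ᵥ w i n) ⬝ᵥ (lam n + lam (n+1)) := by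
          refine Finset.sum_congr rfl fun i _ => ?_
          rw [hmean i n, Matrix.dotProduct_mulVec, Matrix.vecMul_transpose]
      _ = (∑ i, (C i) *ᵥ w i n) ⬝ᵥ (lam n + lam (n+1)) := (sum_dotProduct' _ _).symm
      _ = 0 := by rw [hCw n, zero_dotProduct]
  -- kinetic energy decay
  have hEmono : ∀ n, ∑ i, v i (n+1) ⬝ᵥ (M i) *ᵥ v i (n+1) ≤ ∑ i, v i n ⬝ᵥ (M i) *ᵥ v i n := by
    intro n
    have hsplit : (1/2) * ((∑ i, v i (n+1) ⬝ᵥ (M i) *ᵥ v i (n+1)) - ∑ i, v i n ⬝ᵥ (M i) *ᵥ v i n)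
        + ∑ i, ((γ - 1/2) * ((v i (n+1) - v i n) ⬝ᵥ (M i) *ᵥ (v i (n+1) - v i n))
          + Δt * (w i n ⬝ᵥ (K i) *ᵥ w i n)) = 0 := by
      rw [← Finset.sum_sub_distrib, Finset.mul_sum, ← Finset.sum_add_distrib, ← hz1 n]
      refine Finset.sum_congr rfl fun i _ => ?_
      simp only [hwdef]
      exact (expandA (M i) (K i) (hMsym i) γ Δt (v i n) (v i (n+1))).symm
    have hnn : 0 ≤ ∑ i, ((γ - 1/2) * ((v i (n+1) - v i n) ⬝ᵥ (M i) *ᵥ (v i (n+1) - v i n))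
          + Δt * (w i n ⬝ᵥ (K i) *ᵥ w i n)) := by
      refine Finset.sum_nonneg fun i _ => ?_
      have h1 : 0 ≤ (v i (n+1) - v i n) ⬝ᵥ (M i) *ᵥ (v i (n+1) - v i n) := by
        have := (hM i).posSemidef.dotProduct_mulVec_nonneg (v i (n+1) - v i n); simpa using this
      have h2 : 0 ≤ w i n ⬝ᵥ (K i) *ᵥ w i n := by
        have := (hK i).dotProduct_mulVec_nonneg (w i n); simpa using this
      have := mul_nonneg hγh h1
      have := mul_nonneg hΔt.le h2
      linarith
    linarith
  have hEbound : ∀ n, ∑ i, v i n ⬝ᵥ (M i) *ᵥ v i n ≤ ∑ i, v i 0 ⬝ᵥ (M i) *ᵥ v i 0 := by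
    intro n
    induction n with
    | zero => exact le_rfl
    | succ n ih => exact le_trans (hEmono n) ih
  have hEnonneg : ∀ n, 0 ≤ ∑ i, v i n ⬝ᵥ (M i) *ᵥ v i n := by
    intro n
    refine Finset.sum_nonneg fun i _ => ?_
    have := (hM i).posSemidef.dotProduct_mulVec_nonneg (v i n); simpa using this
  have hFnonneg : ∀ n, 0 ≤ ∑ i, d i n ⬝ᵥ (K i) *ᵥ d i n := by
    intro n
    refine Finset.sum_nonneg fun i _ => ?_
    have := (hK i).dotProduct_mulVec_nonneg (d i n); simpa using this
  -- potential-energy-type decay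
  have hGmono : ∀ n, (∑ i, d i (n+1) ⬝ᵥ (K i) *ᵥ d i (n+1)) + Δt*(γ-1/2)*(∑ i, v i (n+1) ⬝ᵥ (M i) *ᵥ v i (n+1))
      ≤ (∑ i, d i n ⬝ᵥ (K i) *ᵥ d i n) + Δt*(γ-1/2)*(∑ i, v i n ⬝ᵥ (M i) *ᵥ v i n) := by
    intro n
    have hsplit : (∑ i, (1/2) * ((v i n + v i (n+1)) ⬝ᵥ (M i) *ᵥ (v i n + v i (n+1))))
        + ((γ - 1/2) * ((∑ i, v i (n+1) ⬝ᵥ (M i) *ᵥ v i (n+1)) - ∑ i, v i n ⬝ᵥ (M i) *ᵥ v i n)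
          + (1/Δt) * ((∑ i, d i (n+1) ⬝ᵥ (K i) *ᵥ d i (n+1)) - ∑ i, d i n ⬝ᵥ (K i) *ᵥ d i n)) = 0 := by
      rw [← Finset.sum_sub_distrib, ← Finset.sum_sub_distrib, Finset.mul_sum (a := (γ-1/2)),
        Finset.mul_sum (a := (1/Δt)), ← Finset.sum_add_distrib, ← Finset.sum_add_distrib, ← hz2 n]
      refine Finset.sum_congr rfl fun i _ => ?_
      rw [hupd' i n]
      simp only [hwdef]
      exact (expandB (M i) (K i) (hMsym i) (hKsym i) γ Δt hΔt' (v i n) (v i (n+1)) (d i n)).symm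
    have hnn : 0 ≤ ∑ i, (1/2) * ((v i n + v i (n+1)) ⬝ᵥ (M i) *ᵥ (v i n + v i (n+1))) := by
      refine Finset.sum_nonneg fun i _ => ?_
      exact mul_nonneg (by norm_num) (psd_dot_nonneg (hM i).posSemidef (v i n + v i (n+1)))
    have hkey : (γ - 1/2) * ((∑ i, v i (n+1) ⬝ᵥ (M i) *ᵥ v i (n+1)) - ∑ i, v i n ⬝ᵥ (M i) *ᵥ v i n)
          + (1/Δt) * ((∑ i, d i (n+1) ⬝ᵥ (K i) *ᵥ d i (n+1)) - ∑ i, d i n ⬝ᵥ (K i) *ᵥ d i n) ≤ 0 := by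
      linarith
    have := mul_nonpos_of_nonneg_of_nonpos hΔt.le hkey
    have hexp : Δt * ((γ - 1/2) * ((∑ i, v i (n+1) ⬝ᵥ (M i) *ᵥ v i (n+1)) - ∑ i, v i n ⬝ᵥ (M i) *ᵥ v i n)
          + (1/Δt) * ((∑ i, d i (n+1) ⬝ᵥ (K i) *ᵥ d i (n+1)) - ∑ i, d i n ⬝ᵥ (K i) *ᵥ d i n))
        = Δt*(γ-1/2)*((∑ i, v i (n+1) ⬝ᵥ (M i) *ᵥ v i (n+1)) - ∑ i, v i n ⬝ᵥ (M i) *ᵥ v i n)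
          + ((∑ i, d i (n+1) ⬝ᵥ (K i) *ᵥ d i (n+1)) - ∑ i, d i n ⬝ᵥ (K i) *ᵥ d i n) := by
      field_simp
    rw [hexp] at this
    linarith
  have hFbound : ∀ n, ∑ i, d i n ⬝ᵥ (K i) *ᵥ d i n
      ≤ (∑ i, d i 0 ⬝ᵥ (K i) *ᵥ d i 0) + Δt*(γ-1/2)*(∑ i, v i 0 ⬝ᵥ (M i) *ᵥ v i 0) := by
    intro n
    have hG : ∀ k, (∑ i, d i k ⬝ᵥ (K i) *ᵥ d i k) + Δt*(γ-1/2)*(∑ i, v i k ⬝ᵥ (M i) *ᵥ v i k)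
        ≤ (∑ i, d i 0 ⬝ᵥ (K i) *ᵥ d i 0) + Δt*(γ-1/2)*(∑ i, v i 0 ⬝ᵥ (M i) *ᵥ v i 0) := by
      intro k
      induction k with
      | zero => exact le_rfl
      | succ k ih => exact le_trans (hGmono k) ih
    have h1 := hG n
    have h2 : 0 ≤ Δt*(γ-1/2)*(∑ i, v i n ⬝ᵥ (M i) *ᵥ v i n) :=
      mul_nonneg (mul_nonneg hΔt.le hγh) (hEnonneg n)
    linarith
  -- conserved quantities in kernel directions
  have hzv : ∀ z : (∀ i : Fin S, Fin (nn i) → ℝ), (∀ i, (K i) *ᵥ z i = 0) →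
      (∑ i, (C i) *ᵥ z i = 0) → ∀ k, ∑ i, z i ⬝ᵥ (M i) *ᵥ v i k = 0 := by
    intro z hKz hCz k
    have hterm : ∀ i, z i ⬝ᵥ (M i) *ᵥ v i k = ((C i) *ᵥ z i) ⬝ᵥ lam k := by
      intro i
      have h2 : z i ⬝ᵥ ((M i) *ᵥ v i k + (K i) *ᵥ d i k) = z i ⬝ᵥ ((C i)ᵀ *ᵥ lam k) := by
        rw [heq i k]
      rw [dotProduct_add] at h2
      have h3 : z i ⬝ᵥ (K i) *ᵥ d i k = 0 := by
        rw [dot_symm (hKsym i), hKz i, dotProduct_zero]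
      rw [h3, add_zero] at h2
      rw [h2, Matrix.dotProduct_mulVec, Matrix.vecMul_transpose]
    rw [Finset.sum_congr rfl fun i _ => hterm i, ← sum_dotProduct', hCz,
      zero_dotProduct]
  have hconsv : ∀ z : (∀ i : Fin S, Fin (nn i) → ℝ), (∀ i, (K i) *ᵥ z i = 0) →
      (∑ i, (C i) *ᵥ z i = 0) → ∀ n,
      ∑ i, z i ⬝ᵥ (M i) *ᵥ d i n = ∑ i, z i ⬝ᵥ (M i) *ᵥ d i 0 := by
    intro z hKz hCz n
    induction n with
    | zero => rfl
    | succ n ih =>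
      have hterm : ∀ i, z i ⬝ᵥ (M i) *ᵥ d i (n+1)
          = z i ⬝ᵥ (M i) *ᵥ d i n + (Δt*(1-γ) * (z i ⬝ᵥ (M i) *ᵥ v i n)
            + Δt*γ * (z i ⬝ᵥ (M i) *ᵥ v i (n+1))) := by
        intro i
        rw [hupd' i n]
        simp only [hwdef]
        simp only [Matrix.mulVec_add, Matrix.mulVec_smul, dotProduct_add,
          dotProduct_smul, smul_eq_mul]
        ring
      rw [Finset.sum_congr rfl fun i _ => hterm i, Finset.sum_add_distrib,
        Finset.sum_add_distrib, ← Finset.mul_sum, ← Finset.mul_sum,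
        hzv z hKz hCz n, hzv z hKz hCz (n+1), ih]
      ring
  -- uniform dimension constant
  set SN : ℝ := Real.sqrt (∑ j : Fin S, (nn j : ℝ)) with hSNdef
  have hSNnn : 0 ≤ SN := Real.sqrt_nonneg _
  have hSN : ∀ i : Fin S, Real.sqrt (nn i) ≤ SN := by
    intro i
    refine Real.sqrt_le_sqrt ?_
    exact Finset.single_le_sum (f := fun j => ((nn j : ℝ))) (fun j _ => Nat.cast_nonneg _)
      (Finset.mem_univ i)
  -- bound on v
  have hcontM : Continuous (fun x : (∀ i : Fin S, Fin (nn i) → ℝ) => ∑ i, x i ⬝ᵥ (M i) *ᵥ x i) := by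
    simp only [dotProduct, mulVec]
    fun_prop
  have hposM : ∀ x : (∀ i : Fin S, Fin (nn i) → ℝ), x ∈ (⊤ : Submodule ℝ _) → x ≠ 0 →
      0 < ∑ i, x i ⬝ᵥ (M i) *ᵥ x i := by
    intro x _ hx
    have hex : ∃ i, x i ≠ 0 := by
      by_contra h; push_neg at h; exact hx (funext fun i => h i)
    obtain ⟨i0, hi0⟩ := hex
    exact Finset.sum_pos' (fun i _ => psd_dot_nonneg (hM i).posSemidef (x i))
      ⟨i0, Finset.mem_univ _, pd_dot_pos (hM i0) hi0⟩
  have hhomM : ∀ (t : ℝ) (x : ∀ i : Fin S, Fin (nn i) → ℝ), 0 ≤ t →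
      (∑ i, (t • x) i ⬝ᵥ (M i) *ᵥ (t • x) i) = t^2 * ∑ i, x i ⬝ᵥ (M i) *ᵥ x i := by
    intro t x _
    rw [Finset.mul_sum]
    refine Finset.sum_congr rfl fun i _ => ?_
    simp only [Pi.smul_apply, Matrix.mulVec_smul, smul_dotProduct,
      dotProduct_smul, smul_eq_mul]
    ring
  obtain ⟨cv, hcv, hcvle⟩ := quad_bound_pi (⊤ : Submodule ℝ (∀ i : Fin S, Fin (nn i) → ℝ))
    (fun x => ∑ i, x i ⬝ᵥ (M i) *ᵥ x i) hcontM hposM hhomM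
  set NT : ℝ := ∑ j : Fin S, (nn j : ℝ) with hNTdef
  have hNT : ∀ i : Fin S, (nn i : ℝ) ≤ NT := by
    intro i
    rw [hNTdef]
    exact Finset.single_le_sum (f := fun j : Fin S => ((nn j : ℝ)))
      (fun j _ => Nat.cast_nonneg _) (Finset.mem_univ i)
  have hNTnn : (0:ℝ) ≤ NT := by
    rw [hNTdef]
    exact Finset.sum_nonneg fun j _ => Nat.cast_nonneg _
  set Bv : ℝ := Real.sqrt (NT * (∑ i, v i 0 ⬝ᵥ (M i) *ᵥ v i 0) / cv) with hBvdef
  have hvb : ∀ i n, _root_.enorm (v i n) ≤ Bv := by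
    intro i n
    have h1 := hcvle (fun j => v j n) Submodule.mem_top i
    have h2 : cv * _root_.enorm (v i n) ^ 2 ≤ NT * (∑ i, v i 0 ⬝ᵥ (M i) *ᵥ v i 0) :=
      le_trans h1 (mul_le_mul (hNT i) (hEbound n) (hEnonneg n) hNTnn)
    have h3 : _root_.enorm (v i n) ^ 2 ≤ NT * (∑ i, v i 0 ⬝ᵥ (M i) *ᵥ v i 0) / cv :=
      (le_div_iff₀ hcv).mpr (by linarith)
    calc _root_.enorm (v i n) = Real.sqrt (_root_.enorm (v i n) ^ 2) := (Real.sqrt_sq (enorm_nonneg' _)).symm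
      _ ≤ Bv := Real.sqrt_le_sqrt h3
  have hBvnn : 0 ≤ Bv := Real.sqrt_nonneg _
  -- bound on d
  set U : Submodule ℝ (∀ i : Fin S, Fin (nn i) → ℝ) :=
    { carrier := {x | (∑ i, (C i) *ᵥ x i = 0) ∧ ∀ z : (∀ i : Fin S, Fin (nn i) → ℝ),
        (∀ i, (K i) *ᵥ z i = 0) → (∑ i, (C i) *ᵥ z i = 0) →
        ∑ i, z i ⬝ᵥ (M i) *ᵥ x i = 0},
      add_mem' := by
        rintro a b ⟨ha1, ha2⟩ ⟨hb1, hb2⟩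
        refine ⟨?_, ?_⟩
        · simp only [Pi.add_apply, Matrix.mulVec_add, Finset.sum_add_distrib, ha1, hb1, add_zero]
        · intro z hKz hCz
          simp only [Pi.add_apply, Matrix.mulVec_add, dotProduct_add,
            Finset.sum_add_distrib, ha2 z hKz hCz, hb2 z hKz hCz, add_zero]
      zero_mem' := by
        refine ⟨by simp, fun z _ _ => by simp⟩
      smul_mem' := by
        rintro c a ⟨ha1, ha2⟩
        refine ⟨?_, ?_⟩
        · simp only [Pi.smul_apply, Matrix.mulVec_smul, ← Finset.smul_sum, ha1, smul_zero]
        · intro z hKz hCz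
          simp only [Pi.smul_apply, Matrix.mulVec_smul, dotProduct_smul,
            ← Finset.smul_sum, ha2 z hKz hCz, smul_zero] } with hUdef
  have hmemU : ∀ x : (∀ i : Fin S, Fin (nn i) → ℝ), x ∈ U ↔
      ((∑ i, (C i) *ᵥ x i = 0) ∧ ∀ z : (∀ i : Fin S, Fin (nn i) → ℝ),
        (∀ i, (K i) *ᵥ z i = 0) → (∑ i, (C i) *ᵥ z i = 0) →
        ∑ i, z i ⬝ᵥ (M i) *ᵥ x i = 0) := fun x => Iff.rfl
  have hcontK : Continuous (fun x : (∀ i : Fin S, Fin (nn i) → ℝ) => ∑ i, x i ⬝ᵥ (K i) *ᵥ x i) := by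
    simp only [dotProduct, mulVec]
    fun_prop
  have hposK : ∀ x ∈ U, x ≠ 0 → 0 < ∑ i, x i ⬝ᵥ (K i) *ᵥ x i := by
    intro x hxU hx
    obtain ⟨hx1, hx2⟩ := (hmemU x).mp hxU
    have hnonneg : ∀ i ∈ Finset.univ, 0 ≤ x i ⬝ᵥ (K i) *ᵥ x i :=
      fun i _ => psd_dot_nonneg (hK i) (x i)
    refine lt_of_le_of_ne (Finset.sum_nonneg hnonneg) (fun h => hx ?_)
    have hzero : ∀ i ∈ Finset.univ, x i ⬝ᵥ (K i) *ᵥ x i = 0 :=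
      (Finset.sum_eq_zero_iff_of_nonneg hnonneg).mp h.symm
    have hKx : ∀ i, (K i) *ᵥ x i = 0 :=
      fun i => psd_mulVec_eq_zero (hK i) (hzero i (Finset.mem_univ i))
    have hMx : ∑ i, x i ⬝ᵥ (M i) *ᵥ x i = 0 := hx2 x hKx hx1
    have hMnonneg : ∀ i ∈ Finset.univ, 0 ≤ x i ⬝ᵥ (M i) *ᵥ x i :=
      fun i _ => psd_dot_nonneg (hM i).posSemidef (x i)
    have hMzero : ∀ i ∈ Finset.univ, x i ⬝ᵥ (M i) *ᵥ x i = 0 :=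
      (Finset.sum_eq_zero_iff_of_nonneg hMnonneg).mp hMx
    funext i
    by_contra hxi
    exact (pd_dot_pos (hM i) hxi).ne' (hMzero i (Finset.mem_univ i))
  have hhomK : ∀ (t : ℝ) (x : ∀ i : Fin S, Fin (nn i) → ℝ), 0 ≤ t →
      (∑ i, (t • x) i ⬝ᵥ (K i) *ᵥ (t • x) i) = t^2 * ∑ i, x i ⬝ᵥ (K i) *ᵥ x i := by
    intro t x _
    rw [Finset.mul_sum]
    refine Finset.sum_congr rfl fun i _ => ?_
    simp only [Pi.smul_apply, Matrix.mulVec_smul, smul_dotProduct,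
      dotProduct_smul, smul_eq_mul]
    ring
  obtain ⟨cd, hcd, hcdle⟩ := quad_bound_pi U (fun x => ∑ i, x i ⬝ᵥ (K i) *ᵥ x i)
    hcontK hposK hhomK
  have hdmemU : ∀ n, (fun i => d i n - d i 0) ∈ U := by
    intro n
    refine (hmemU _).mpr ⟨?_, ?_⟩
    · simp only [Matrix.mulVec_sub, Finset.sum_sub_distrib, hcont n, hcont 0, sub_zero]
    · intro z hKz hCz
      simp only [Matrix.mulVec_sub, dotProduct_sub, Finset.sum_sub_distrib,
        hconsv z hKz hCz n, sub_self]
  set BF : ℝ := 4*(∑ i, d i 0 ⬝ᵥ (K i) *ᵥ d i 0)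
      + 2*(Δt*(γ-1/2)*(∑ i, v i 0 ⬝ᵥ (M i) *ᵥ v i 0)) with hBFdef
  have hfd : ∀ n, (∑ i, (d i n - d i 0) ⬝ᵥ (K i) *ᵥ (d i n - d i 0)) ≤ BF := by
    intro n
    have h1 : (∑ i, (d i n - d i 0) ⬝ᵥ (K i) *ᵥ (d i n - d i 0))
        ≤ ∑ i, (2 * (d i n ⬝ᵥ (K i) *ᵥ d i n) + 2 * (d i 0 ⬝ᵥ (K i) *ᵥ d i 0)) :=
      Finset.sum_le_sum fun i _ => expand_diff (K i) (hKsym i) (hK i) (d i n) (d i 0)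
    rw [Finset.sum_add_distrib, ← Finset.mul_sum, ← Finset.mul_sum] at h1
    have h2 := hFbound n
    rw [hBFdef]
    linarith
  have hfdnn : ∀ n, 0 ≤ (∑ i, (d i n - d i 0) ⬝ᵥ (K i) *ᵥ (d i n - d i 0)) :=
    fun n => Finset.sum_nonneg fun i _ => psd_dot_nonneg (hK i) _
  set Bd1 : ℝ := Real.sqrt (NT * BF / cd) with hBd1def
  have hdb1 : ∀ i n, _root_.enorm (d i n - d i 0) ≤ Bd1 := by
    intro i n
    have h1 := hcdle (fun j => d j n - d j 0) (hdmemU n) i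
    have h2 : cd * _root_.enorm (d i n - d i 0) ^ 2 ≤ NT * BF :=
      le_trans h1 (mul_le_mul (hNT i) (hfd n) (hfdnn n) hNTnn)
    have h3 : _root_.enorm (d i n - d i 0) ^ 2 ≤ NT * BF / cd :=
      (le_div_iff₀ hcd).mpr (by linarith)
    calc _root_.enorm (d i n - d i 0) = Real.sqrt (_root_.enorm (d i n - d i 0) ^ 2) :=
          (Real.sqrt_sq (enorm_nonneg' _)).symm
      _ ≤ Bd1 := Real.sqrt_le_sqrt h3
  have hFinS : Nonempty (Fin S) := ⟨⟨0, hS⟩⟩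
  set Bd0 : ℝ := Finset.univ.sup' (Finset.univ_nonempty) (fun i : Fin S => _root_.enorm (d i 0)) with hBd0def
  have hBd0 : ∀ i : Fin S, _root_.enorm (d i 0) ≤ Bd0 := by
    intro i
    rw [hBd0def]
    exact Finset.le_sup' (fun i : Fin S => _root_.enorm (d i 0)) (Finset.mem_univ i)
  have hBd0nn : 0 ≤ Bd0 := le_trans (enorm_nonneg' (d (Classical.arbitrary (Fin S)) 0)) (hBd0 _)
  have hdb : ∀ i n, _root_.enorm (d i n) ≤ Bd0 + Bd1 := by
    intro i n
    have h0 : d i n = d i 0 + (d i n - d i 0) := by abel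
    calc _root_.enorm (d i n) = _root_.enorm (d i 0 + (d i n - d i 0)) := by rw [← h0]
      _ ≤ _root_.enorm (d i 0) + _root_.enorm (d i n - d i 0) := enorm_add_le_euc _ _
      _ ≤ Bd0 + Bd1 := add_le_add (hBd0 i) (hdb1 i n)
  have hBd1nn : 0 ≤ Bd1 := Real.sqrt_nonneg _
  -- bound on lam
  have hcontL : Continuous (fun μ : Fin m → ℝ => ∑ i, ((C i)ᵀ *ᵥ μ) ⬝ᵥ ((C i)ᵀ *ᵥ μ)) := by
    simp only [dotProduct, mulVec]
    fun_prop
  have hposL : ∀ μ : Fin m → ℝ, μ ≠ 0 → 0 < ∑ i, ((C i)ᵀ *ᵥ μ) ⬝ᵥ ((C i)ᵀ *ᵥ μ) := by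
    intro μ hμ
    have hnonneg : ∀ i ∈ Finset.univ, 0 ≤ ((C i)ᵀ *ᵥ μ) ⬝ᵥ ((C i)ᵀ *ᵥ μ) :=
      fun i _ => dot_self_nonneg _
    refine lt_of_le_of_ne (Finset.sum_nonneg hnonneg) (fun h => hμ ?_)
    have hzero := (Finset.sum_eq_zero_iff_of_nonneg hnonneg).mp h.symm
    exact hind μ fun i => dotProduct_self_eq_zero.mp (hzero i (Finset.mem_univ i))
  have hhomL : ∀ (t : ℝ) (μ : Fin m → ℝ), 0 ≤ t →
      (∑ i, ((C i)ᵀ *ᵥ (t • μ)) ⬝ᵥ ((C i)ᵀ *ᵥ (t • μ)))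
        = t^2 * ∑ i, ((C i)ᵀ *ᵥ μ) ⬝ᵥ ((C i)ᵀ *ᵥ μ) := by
    intro t μ _
    rw [Finset.mul_sum]
    refine Finset.sum_congr rfl fun i _ => ?_
    simp only [Matrix.mulVec_smul, smul_dotProduct, dotProduct_smul, smul_eq_mul]
    ring
  obtain ⟨cl, hcl, hclle⟩ := quad_bound_vec (fun μ => ∑ i, ((C i)ᵀ *ᵥ μ) ⬝ᵥ ((C i)ᵀ *ᵥ μ))
    hcontL hposL hhomL
  choose cM hcM0 hcM using fun i => enorm_mulVec_le (M i)
  choose cK hcK0 hcK using fun i => enorm_mulVec_le (K i)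
  set BL : ℝ := ∑ i, (cM i * Bv + cK i * (Bd0 + Bd1))^2 with hBLdef
  have hfL : ∀ n, (∑ i, ((C i)ᵀ *ᵥ lam n) ⬝ᵥ ((C i)ᵀ *ᵥ lam n)) ≤ BL := by
    intro n
    rw [hBLdef]
    refine Finset.sum_le_sum fun i _ => ?_
    have h1 : (C i)ᵀ *ᵥ lam n = (M i) *ᵥ v i n + (K i) *ᵥ d i n := (heq i n).symm
    rw [h1, ← enorm_sq]
    have h2 : _root_.enorm ((M i) *ᵥ v i n + (K i) *ᵥ d i n) ≤ cM i * Bv + cK i * (Bd0 + Bd1) := by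
      calc _root_.enorm ((M i) *ᵥ v i n + (K i) *ᵥ d i n)
          ≤ _root_.enorm ((M i) *ᵥ v i n) + _root_.enorm ((K i) *ᵥ d i n) := enorm_add_le_euc _ _
        _ ≤ cM i * Bv + cK i * (Bd0 + Bd1) := by
            refine add_le_add (le_trans (hcM i _) ?_) (le_trans (hcK i _) ?_)
            · exact mul_le_mul_of_nonneg_left (hvb i n) (hcM0 i)
            · exact mul_le_mul_of_nonneg_left (hdb i n) (hcK0 i)
    exact pow_le_pow_left₀ (enorm_nonneg' _) h2 2
  have hBLnn : 0 ≤ BL := by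
    rw [hBLdef]
    exact Finset.sum_nonneg fun i _ => sq_nonneg _
  set Blam : ℝ := Real.sqrt ((m : ℝ) * BL / cl) with hBlamdef
  have hlb : ∀ n, _root_.enorm (lam n) ≤ Blam := by
    intro n
    have h1 := hclle (lam n)
    have h2 : cl * _root_.enorm (lam n) ^ 2 ≤ (m : ℝ) * BL :=
      le_trans h1 (mul_le_mul_of_nonneg_left (hfL n) (Nat.cast_nonneg _))
    have h3 : _root_.enorm (lam n) ^ 2 ≤ (m : ℝ) * BL / cl :=
      (le_div_iff₀ hcl).mpr (by linarith)
    calc _root_.enorm (lam n) = Real.sqrt (_root_.enorm (lam n) ^ 2) := (Real.sqrt_sq (enorm_nonneg' _)).symm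
      _ ≤ Blam := Real.sqrt_le_sqrt h3
  have hBlamnn : 0 ≤ Blam := Real.sqrt_nonneg _
  -- conclusion
  refine ⟨Bv + (Bd0 + Bd1) + Blam + 1, by linarith, fun i n => ?_⟩
  refine ⟨?_, ?_, ?_⟩
  · have := hdb i n; linarith
  · have := hvb i n; linarith
  · have := hlb n; linarith
end

section
/- Stability of the modified d-continuity method: under the modified d-continuity domain decomposition method with linearly independent constraints, trapezoidal parameter 0 < γ ≤ 1, and each A_i := M_i + (γ − 1/2)·Δt·K_i positive definite, all quantities are bounded: there exists a constant C > 0 such that for all i ∈ {1,…,S} and all n ∈ ℕ, ‖d_i(n)‖ ≤ C, ‖w_i(n)‖ ≤ C, and ‖μ(n)‖ ≤ C. Consequently, the interpolated integer-level rates γ·w_i(n) + (1−γ)·w_i(n+1) and multipliers γ·μ(n) + (1−γ)·μ(n+1) are also bounded. -/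
open Matrix

/-- The Euclidean norm of a vector indexed by `Fin k`. -/
noncomputable def euclidEnorm {k : ℕ} (x : Fin k → ℝ) : ℝ := Real.sqrt (x ⬝ᵥ x)

section aux
variable {k l : ℕ}

lemma qnn (x : Fin k → ℝ) : 0 ≤ x ⬝ᵥ x :=
  Finset.sum_nonneg fun _ _ => mul_self_nonneg _

lemma q_eq_zero {x : Fin k → ℝ} (h : x ⬝ᵥ x = 0) : x = 0 := by
  funext i
  have := (Finset.sum_eq_zero_iff_of_nonneg
    (fun i _ => mul_self_nonneg (x i))).1 h i (Finset.mem_univ i)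
  simpa [mul_self_eq_zero] using this

lemma sym_dot {A : Matrix (Fin k) (Fin k) ℝ} (h : Aᵀ = A) (x y : Fin k → ℝ) :
    x ⬝ᵥ A *ᵥ y = y ⬝ᵥ A *ᵥ x := by
  conv_lhs => rw [dotProduct_mulVec, ← h, vecMul_transpose]
  exact dotProduct_comm _ _

lemma herm_transpose {A : Matrix (Fin k) (Fin k) ℝ} (h : A.IsHermitian) : Aᵀ = A := by
  rw [← conjTranspose_eq_transpose_of_trivial]; exact h

lemma psd_q {P : Matrix (Fin k) (Fin k) ℝ} (hP : P.PosSemidef) (x : Fin k → ℝ) :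
    0 ≤ x ⬝ᵥ P *ᵥ x := by simpa [star_trivial] using hP.dotProduct_mulVec_nonneg x

lemma dot_transpose (B : Matrix (Fin l) (Fin k) ℝ) (x : Fin k → ℝ) (y : Fin l → ℝ) :
    x ⬝ᵥ Bᵀ *ᵥ y = (B *ᵥ x) ⬝ᵥ y := by
  rw [dotProduct_mulVec, vecMul_transpose]

lemma dot_transpose' (B : Matrix (Fin l) (Fin k) ℝ) (x : Fin l → ℝ) (y : Fin k → ℝ) :
    x ⬝ᵥ B *ᵥ y = (Bᵀ *ᵥ x) ⬝ᵥ y := by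
  conv_lhs => rw [← transpose_transpose B]
  rw [dot_transpose]

lemma sum_dot {ι : Type*} (s : Finset ι) (f : ι → (Fin k → ℝ)) (y : Fin k → ℝ) :
    ∑ i ∈ s, (f i ⬝ᵥ y) = (∑ i ∈ s, f i) ⬝ᵥ y := by
  unfold dotProduct
  rw [Finset.sum_comm]
  refine Finset.sum_congr rfl fun j _ => ?_
  rw [Finset.sum_apply, Finset.sum_mul]

lemma sum_mulVec' {ι : Type*} (s : Finset ι) (A : ι → Matrix (Fin l) (Fin k) ℝ)
    (x : Fin k → ℝ) : (∑ i ∈ s, A i) *ᵥ x = ∑ i ∈ s, (A i *ᵥ x) := by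
  funext j
  simp only [Finset.sum_apply, mulVec, dotProduct, Matrix.sum_apply, Finset.sum_mul]
  rw [Finset.sum_comm]

lemma dot_sum {ι : Type*} (s : Finset ι) (y : Fin k → ℝ) (f : ι → (Fin k → ℝ)) :
    y ⬝ᵥ (∑ i ∈ s, f i) = ∑ i ∈ s, (y ⬝ᵥ f i) := by
  unfold dotProduct
  simp only [Finset.sum_apply, Finset.mul_sum]
  rw [Finset.sum_comm]

lemma quad_upper (B : Matrix (Fin k) (Fin l) ℝ) :
    ∃ c : ℝ, 0 ≤ c ∧ ∀ x, (B *ᵥ x) ⬝ᵥ (B *ᵥ x) ≤ c * (x ⬝ᵥ x) := by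
  refine ⟨∑ j, ∑ i, (B j i)^2,
    Finset.sum_nonneg fun j _ => Finset.sum_nonneg fun i _ => sq_nonneg _, fun x => ?_⟩
  have hrow : ∀ j, (B *ᵥ x) j * (B *ᵥ x) j ≤ (∑ i, (B j i)^2) * (x ⬝ᵥ x) := by
    intro j
    have h := Finset.sum_mul_sq_le_sq_mul_sq Finset.univ (B j) x
    calc (B *ᵥ x) j * (B *ᵥ x) j = (∑ i, B j i * x i)^2 := by simp [mulVec, dotProduct, sq]
    _ ≤ (∑ i, (B j i)^2) * (∑ i, (x i)^2) := h
    _ = (∑ i, (B j i)^2) * (x ⬝ᵥ x) := by simp [dotProduct, sq]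
  calc (B *ᵥ x) ⬝ᵥ (B *ᵥ x) = ∑ j, (B *ᵥ x) j * (B *ᵥ x) j := rfl
  _ ≤ ∑ j, (∑ i, (B j i)^2) * (x ⬝ᵥ x) := Finset.sum_le_sum fun j _ => hrow j
  _ = (∑ j, ∑ i, (B j i)^2) * (x ⬝ᵥ x) := by rw [Finset.sum_mul]

lemma cs_psd {A : Matrix (Fin k) (Fin k) ℝ} (hA : A.PosSemidef) (x y : Fin k → ℝ) :
    (x ⬝ᵥ A *ᵥ y)^2 ≤ (x ⬝ᵥ A *ᵥ x) * (y ⬝ᵥ A *ᵥ y) := by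
  have hsym := herm_transpose hA.1
  have h : ∀ t : ℝ, 0 ≤ (y ⬝ᵥ A *ᵥ y) * (t * t) + (2 * (x ⬝ᵥ A *ᵥ y)) * t + (x ⬝ᵥ A *ᵥ x) := by
    intro t
    have h0 := hA.dotProduct_mulVec_nonneg (x + t • y)
    rw [star_trivial] at h0
    have hexp : (x + t • y) ⬝ᵥ A *ᵥ (x + t • y)
        = (y ⬝ᵥ A *ᵥ y) * (t * t) + (2 * (x ⬝ᵥ A *ᵥ y)) * t + (x ⬝ᵥ A *ᵥ x) := by
      rw [mulVec_add, mulVec_smul, dotProduct_add, add_dotProduct, add_dotProduct,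
        smul_dotProduct, dotProduct_smul, smul_dotProduct, dotProduct_smul,
        sym_dot hsym y x]
      simp only [smul_eq_mul]; ring
    rw [hexp] at h0; exact h0
  have hd := discrim_le_zero h
  rw [discrim] at hd
  nlinarith [hd]

lemma posdef_lower {A : Matrix (Fin k) (Fin k) ℝ} (hA : A.PosDef) :
    ∃ c > (0:ℝ), ∀ x, c * (x ⬝ᵥ x) ≤ x ⬝ᵥ A *ᵥ x := by
  obtain ⟨ci, hci0, hci⟩ := quad_upper A⁻¹
  set c' : ℝ := Real.sqrt ci + 1 with hc'
  have hc'pos : (0:ℝ) < c' := by positivity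
  refine ⟨1/c', by positivity, fun x => ?_⟩
  by_cases hx : x = 0
  · simp [hx]
  · have hAx : A *ᵥ (A⁻¹ *ᵥ x) = x := by
      rw [mulVec_mulVec, mul_nonsing_inv _ ((isUnit_iff_isUnit_det _).1 hA.isUnit), one_mulVec]
    set y := A⁻¹ *ᵥ x with hy
    have hqpos : 0 < x ⬝ᵥ x :=
      lt_of_le_of_ne (qnn x) (fun h => hx (q_eq_zero h.symm))
    have hr : 0 ≤ x ⬝ᵥ A *ᵥ x := psd_q hA.posSemidef x
    have h1 : (x ⬝ᵥ x)^2 ≤ (x ⬝ᵥ A *ᵥ x) * (y ⬝ᵥ x) := by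
      have h := cs_psd hA.posSemidef x y
      rwa [hAx] at h
    have h2 : (y ⬝ᵥ x)^2 ≤ ci * (x ⬝ᵥ x)^2 := by
      have hcs : (y ⬝ᵥ x)^2 ≤ (y ⬝ᵥ y) * (x ⬝ᵥ x) := by
        have h := Finset.sum_mul_sq_le_sq_mul_sq Finset.univ y x
        simpa [dotProduct, sq] using h
      have := hci x
      nlinarith [qnn x]
    have hsq : ci ≤ c'^2 := by
      have h := Real.sq_sqrt hci0
      nlinarith [Real.sqrt_nonneg ci]
    have hcq : 0 < c' * (x ⬝ᵥ x) := mul_pos hc'pos hqpos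
    have hs : y ⬝ᵥ x ≤ c' * (x ⬝ᵥ x) := by
      nlinarith [sq_nonneg (y ⬝ᵥ x - c' * (x ⬝ᵥ x)), sq_nonneg (y ⬝ᵥ x + c' * (x ⬝ᵥ x))]
    rw [div_mul_eq_mul_div, div_le_iff₀ hc'pos]
    nlinarith

lemma quad_step {P : Matrix (Fin k) (Fin k) ℝ} (hP : Pᵀ = P) (x y : Fin k → ℝ) (t : ℝ) :
    (x + t • y) ⬝ᵥ P *ᵥ (x + t • y)
      = x ⬝ᵥ P *ᵥ x + (2*t) * (((1/2 : ℝ) • (x + (x + t • y))) ⬝ᵥ P *ᵥ y) := by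
  have hsym := sym_dot hP y x
  simp only [mulVec_add, mulVec_smul, dotProduct_add, add_dotProduct,
    smul_dotProduct, dotProduct_smul, smul_add, smul_eq_mul]
  rw [hsym]
  ring_nf

lemma q_add_le (x y : Fin k → ℝ) :
    (x + y) ⬝ᵥ (x + y) ≤ 2 * (x ⬝ᵥ x) + 2 * (y ⬝ᵥ y) := by
  have h1 : 0 ≤ (x - y) ⬝ᵥ (x - y) := qnn _
  have h2 : (x + y) ⬝ᵥ (x + y) + (x - y) ⬝ᵥ (x - y) = 2 * (x ⬝ᵥ x) + 2 * (y ⬝ᵥ y) := by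
    simp only [dotProduct_add, add_dotProduct, dotProduct_sub, sub_dotProduct]
    rw [dotProduct_comm y x]
    ring
  linarith

lemma q_smul (c : ℝ) (x : Fin k → ℝ) : (c • x) ⬝ᵥ (c • x) = c^2 * (x ⬝ᵥ x) := by
  rw [smul_dotProduct, dotProduct_smul, smul_eq_mul, smul_eq_mul]; ring

lemma enorm_le_sqrt {x : Fin k → ℝ} {B : ℝ} (h : x ⬝ᵥ x ≤ B) : euclidEnorm x ≤ Real.sqrt B :=
  Real.sqrt_le_sqrt h

lemma enorm_eq_norm (x : Fin k → ℝ) : euclidEnorm x = ‖(WithLp.equiv 2 (Fin k → ℝ)).symm x‖ := by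
  rw [EuclideanSpace.norm_eq]
  unfold euclidEnorm dotProduct
  congr 1
  refine Finset.sum_congr rfl fun i _ => ?_
  rw [show ((WithLp.equiv 2 (Fin k → ℝ)).symm x).ofLp i = x i from rfl, Real.norm_eq_abs, sq_abs, sq]

lemma enorm_interp {x y : Fin k → ℝ} {a b Cb : ℝ} (ha : 0 ≤ a) (hb : 0 ≤ b) (hab : a + b = 1)
    (hx : euclidEnorm x ≤ Cb) (hy : euclidEnorm y ≤ Cb) : euclidEnorm (a • x + b • y) ≤ Cb := by
  rw [enorm_eq_norm] at hx hy ⊢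
  have hsplit : (WithLp.equiv 2 (Fin k → ℝ)).symm (a • x + b • y)
      = a • (WithLp.equiv 2 (Fin k → ℝ)).symm x + b • (WithLp.equiv 2 (Fin k → ℝ)).symm y := by
    rfl
  rw [hsplit]
  have hxnn : (0:ℝ) ≤ ‖(WithLp.equiv 2 (Fin k → ℝ)).symm x‖ := norm_nonneg _
  have hynn : (0:ℝ) ≤ ‖(WithLp.equiv 2 (Fin k → ℝ)).symm y‖ := norm_nonneg _
  calc ‖_‖ ≤ ‖a • (WithLp.equiv 2 (Fin k → ℝ)).symm x‖
        + ‖b • (WithLp.equiv 2 (Fin k → ℝ)).symm y‖ := norm_add_le _ _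
  _ = a * ‖(WithLp.equiv 2 (Fin k → ℝ)).symm x‖ + b * ‖(WithLp.equiv 2 (Fin k → ℝ)).symm y‖ := by
      rw [norm_smul, norm_smul, Real.norm_eq_abs, Real.norm_eq_abs,
        abs_of_nonneg ha, abs_of_nonneg hb]
  _ ≤ a * Cb + b * Cb := by
      gcongr
  _ = Cb := by rw [← add_mul, hab, one_mul]

end aux

/-- Stability of the modified d-continuity method: with linearly independent constraints,
`0 < γ ≤ 1` and each `Aᵢ = Mᵢ + (γ - 1/2)·Δt·Kᵢ` positive definite, the temperatures
`dᵢ(n)`, the weighted-level rates `wᵢ(n)` and multipliers `μ(n)` are bounded, and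
consequently the interpolated integer-level rates `γ·wᵢ(n) + (1-γ)·wᵢ(n+1)` and
multipliers `γ·μ(n) + (1-γ)·μ(n+1)` are also bounded. -/
theorem modified_dContinuity_stable
    (S m : ℕ) (hS : 1 ≤ S) (nn : Fin S → ℕ)
    (M K : ∀ i : Fin S, Matrix (Fin (nn i)) (Fin (nn i)) ℝ)
    (hM : ∀ i, (M i).PosDef) (hK : ∀ i, (K i).PosSemidef)
    (C : ∀ i : Fin S, Matrix (Fin m) (Fin (nn i)) ℝ)
    (Δt γ : ℝ) (hΔt : 0 < Δt) (hγ₀ : 0 < γ) (hγ₁ : γ ≤ 1)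
    (hA : ∀ i, (M i + ((γ - 1/2) * Δt) • K i).PosDef)
    (d w : ∀ i : Fin S, ℕ → (Fin (nn i) → ℝ)) (μ : ℕ → (Fin m → ℝ))
    (heq : ∀ i n, (M i).mulVec (w i n) +
      (K i).mulVec ((1 - γ) • d i n + γ • d i (n + 1)) = (C i)ᵀ.mulVec (μ n))
    (hupd : ∀ i n, d i (n + 1) = d i n + Δt • w i n)
    (hcont : ∀ n, ∑ i : Fin S, (C i).mulVec (d i n) = 0)
    (hind : ∀ ν : Fin m → ℝ, (∀ i, (C i)ᵀ.mulVec ν = 0) → ν = 0) :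
    ∃ C₀ > (0 : ℝ),
      (∀ i : Fin S, ∀ n : ℕ, euclidEnorm (d i n) ≤ C₀ ∧ euclidEnorm (w i n) ≤ C₀) ∧
      (∀ n : ℕ, euclidEnorm (μ n) ≤ C₀) ∧
      (∀ i : Fin S, ∀ n : ℕ, euclidEnorm (γ • w i n + (1 - γ) • w i (n + 1)) ≤ C₀) ∧
      (∀ n : ℕ, euclidEnorm (γ • μ n + (1 - γ) • μ (n + 1)) ≤ C₀) := by
  classical
  -- the modified matrices
  set A : ∀ i : Fin S, Matrix (Fin (nn i)) (Fin (nn i)) ℝ :=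
    fun i => M i + ((γ - 1/2) * Δt) • K i with hAdef
  have hApd : ∀ i, (A i).PosDef := hA
  have hAsym : ∀ i, (A i)ᵀ = A i := fun i => herm_transpose (hApd i).1
  have hKsym : ∀ i, (K i)ᵀ = K i := fun i => herm_transpose (hK i).1
  -- midpoint values
  set dh : ∀ i : Fin S, ℕ → (Fin (nn i) → ℝ) :=
    fun i n => (1/2 : ℝ) • (d i n + d i (n+1)) with hdh
  -- rewritten equation
  have heq' : ∀ i n, (A i) *ᵥ (w i n) = (C i)ᵀ *ᵥ (μ n) - (K i) *ᵥ (dh i n) := by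
    intro i n
    have hmid : (1 - γ) • d i n + γ • d i (n+1)
        = dh i n + ((γ - 1/2) * Δt) • w i n := by
      simp only [hdh]
      rw [hupd i n]
      module
    have h := heq i n
    rw [hmid, mulVec_add (K i) (dh i n) (((γ - 1/2) * Δt) • w i n),
      mulVec_smul (K i) ((γ - 1/2) * Δt) (w i n)] at h
    rw [hAdef]
    simp only [add_mulVec, smul_mulVec]
    rw [eq_sub_iff_add_eq, ← h]
    abel
  -- constraint sums
  have hsumdh : ∀ n, ∑ i, (C i) *ᵥ (dh i n) = 0 := by
    intro n
    have : ∀ i, (C i) *ᵥ (dh i n)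
        = (1/2 : ℝ) • ((C i) *ᵥ (d i n) + (C i) *ᵥ (d i (n+1))) := by
      intro i; simp only [hdh]; rw [mulVec_smul, mulVec_add]
    rw [Finset.sum_congr rfl fun i _ => this i, ← Finset.smul_sum,
      Finset.sum_add_distrib, hcont n, hcont (n+1)]
    simp
  have hsumw : ∀ n, ∑ i, (C i) *ᵥ (w i n) = 0 := by
    intro n
    have hw : ∀ i, Δt • ((C i) *ᵥ (w i n)) = (C i) *ᵥ (d i (n+1)) - (C i) *ᵥ (d i n) := by
      intro i
      rw [hupd i n, mulVec_add, mulVec_smul]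
      abel
    have h : Δt • (∑ i, (C i) *ᵥ (w i n)) = 0 := by
      rw [Finset.smul_sum, Finset.sum_congr rfl fun i _ => hw i, Finset.sum_sub_distrib,
        hcont (n+1), hcont n, sub_zero]
    rcases smul_eq_zero.1 h with h' | h'
    · exact absurd h' hΔt.ne'
    · exact h'
  -- energies
  set V : ℕ → ℝ := fun n => ∑ i, d i n ⬝ᵥ (A i *ᵥ d i n) with hV
  set E : ℕ → ℝ := fun n => ∑ i, d i n ⬝ᵥ (K i *ᵥ d i n) with hE
  set W : ℕ → ℝ := fun n => ∑ i, w i n ⬝ᵥ (A i *ᵥ w i n) with hW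
  -- per-i step identities
  have hstep : ∀ (i : Fin S) (n : ℕ) (P : Matrix (Fin (nn i)) (Fin (nn i)) ℝ), Pᵀ = P →
      d i (n+1) ⬝ᵥ P *ᵥ d i (n+1)
        = d i n ⬝ᵥ P *ᵥ d i n + (2*Δt) * (dh i n ⬝ᵥ P *ᵥ w i n) := by
    intro i n P hP
    have h := quad_step hP (d i n) (w i n) Δt
    rw [← hupd i n] at h
    simp only [hdh]
    exact h
  -- V step
  have hVstep : ∀ n, V (n+1) = V n - (2*Δt) * ∑ i, dh i n ⬝ᵥ (K i *ᵥ dh i n) := by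
    intro n
    have hterm : ∀ i : Fin S, d i (n+1) ⬝ᵥ (A i *ᵥ d i (n+1))
        = d i n ⬝ᵥ (A i *ᵥ d i n)
          + (2*Δt) * (((C i) *ᵥ dh i n) ⬝ᵥ μ n - dh i n ⬝ᵥ (K i *ᵥ dh i n)) := by
      intro i
      rw [hstep i n (A i) (hAsym i), heq' i n, dotProduct_sub, dot_transpose]
    simp only [hV]
    rw [Finset.sum_congr rfl fun i _ => hterm i, Finset.sum_add_distrib, ← Finset.mul_sum,
      Finset.sum_sub_distrib, sum_dot Finset.univ, hsumdh n, zero_dotProduct]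
    ring
  -- E step
  have hWalt : ∀ n, W n = - ∑ i, dh i n ⬝ᵥ (K i *ᵥ w i n) := by
    intro n
    have hterm : ∀ i : Fin S, w i n ⬝ᵥ (A i *ᵥ w i n)
        = ((C i) *ᵥ w i n) ⬝ᵥ μ n - dh i n ⬝ᵥ (K i *ᵥ w i n) := by
      intro i
      rw [heq' i n, dotProduct_sub, dot_transpose, sym_dot (hKsym i) (w i n) (dh i n)]
    simp only [hW]
    rw [Finset.sum_congr rfl fun i _ => hterm i, Finset.sum_sub_distrib, sum_dot Finset.univ,
      hsumw n, zero_dotProduct, zero_sub]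
  have hEstep : ∀ n, E (n+1) = E n - (2*Δt) * W n := by
    intro n
    have hterm : ∀ i : Fin S, d i (n+1) ⬝ᵥ (K i *ᵥ d i (n+1))
        = d i n ⬝ᵥ (K i *ᵥ d i n) + (2*Δt) * (dh i n ⬝ᵥ (K i *ᵥ w i n)) := fun i =>
      hstep i n (K i) (hKsym i)
    simp only [hE]
    rw [Finset.sum_congr rfl fun i _ => hterm i, Finset.sum_add_distrib, ← Finset.mul_sum,
      hWalt n]
    ring
  -- nonnegativity facts
  have hVterm_nn : ∀ i n, 0 ≤ d i n ⬝ᵥ (A i *ᵥ d i n) :=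
    fun i n => psd_q (hApd i).posSemidef _
  have hWterm_nn : ∀ i n, 0 ≤ w i n ⬝ᵥ (A i *ᵥ w i n) :=
    fun i n => psd_q (hApd i).posSemidef _
  have hEterm_nn : ∀ i n, 0 ≤ d i n ⬝ᵥ (K i *ᵥ d i n) := fun i n => psd_q (hK i) _
  have hdhterm_nn : ∀ i n, 0 ≤ dh i n ⬝ᵥ (K i *ᵥ dh i n) := fun i n => psd_q (hK i) _
  have hWnn : ∀ n, 0 ≤ W n := fun n => Finset.sum_nonneg fun i _ => hWterm_nn i n
  have hEnn : ∀ n, 0 ≤ E n := fun n => Finset.sum_nonneg fun i _ => hEterm_nn i n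
  -- monotonicity
  have hVmono : ∀ n, V n ≤ V 0 := by
    intro n
    induction n with
    | zero => exact le_rfl
    | succ n ih =>
      have h := hVstep n
      have hnn : 0 ≤ ∑ i, dh i n ⬝ᵥ (K i *ᵥ dh i n) :=
        Finset.sum_nonneg fun i _ => hdhterm_nn i n
      nlinarith
  have hEmono : ∀ n, E n ≤ E 0 := by
    intro n
    induction n with
    | zero => exact le_rfl
    | succ n ih =>
      have h := hEstep n
      have h2 := hWnn n
      nlinarith
  -- lower bounds from positive definiteness
  choose cA hcA0 hcA using fun i => posdef_lower (hApd i)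
  -- bounds on q(d) and q(w)
  set Qd : Fin S → ℝ := fun i => V 0 / cA i with hQd
  set Qw : Fin S → ℝ := fun i => E 0 / (2 * Δt * cA i) with hQw
  have hqd : ∀ i n, (d i n) ⬝ᵥ (d i n) ≤ Qd i := by
    intro i n
    have h1 : cA i * ((d i n) ⬝ᵥ (d i n)) ≤ d i n ⬝ᵥ (A i *ᵥ d i n) := hcA i _
    have h2 : d i n ⬝ᵥ (A i *ᵥ d i n) ≤ V n :=
      Finset.single_le_sum (fun j _ => hVterm_nn j n) (Finset.mem_univ i)
    rw [hQd]
    rw [le_div_iff₀ (hcA0 i)]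
    calc (d i n) ⬝ᵥ (d i n) * cA i = cA i * ((d i n) ⬝ᵥ (d i n)) := by ring
    _ ≤ V n := le_trans h1 h2
    _ ≤ V 0 := hVmono n
  have hqw : ∀ i n, (w i n) ⬝ᵥ (w i n) ≤ Qw i := by
    intro i n
    have h1 : cA i * ((w i n) ⬝ᵥ (w i n)) ≤ w i n ⬝ᵥ (A i *ᵥ w i n) := hcA i _
    have h2 : w i n ⬝ᵥ (A i *ᵥ w i n) ≤ W n :=
      Finset.single_le_sum (fun j _ => hWterm_nn j n) (Finset.mem_univ i)
    have h3 : (2*Δt) * W n = E n - E (n+1) := by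
      have := hEstep n; linarith
    have h4 : (2*Δt) * W n ≤ E 0 := by
      have := hEmono n
      have := hEnn (n+1)
      linarith
    have h5 : cA i * ((w i n) ⬝ᵥ (w i n)) * (2*Δt) ≤ E 0 := by
      have h6 : (2*Δt) * (w i n ⬝ᵥ (A i *ᵥ w i n)) ≤ (2*Δt) * W n := by
        have : (0:ℝ) < 2*Δt := by linarith
        exact (mul_le_mul_iff_right₀ this).2 h2
      nlinarith [hcA0 i, qnn (w i n)]
    rw [hQw, le_div_iff₀ (mul_pos (mul_pos (by norm_num) hΔt) (hcA0 i))]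
    nlinarith
  -- Gram matrix of the constraints
  set G : Matrix (Fin m) (Fin m) ℝ := ∑ i, C i * (C i)ᵀ with hG
  have hGq : ∀ ν : Fin m → ℝ, ν ⬝ᵥ (G *ᵥ ν) = ∑ i, ((C i)ᵀ *ᵥ ν) ⬝ᵥ ((C i)ᵀ *ᵥ ν) := by
    intro ν
    have hterm : ∀ i : Fin S, ν ⬝ᵥ ((C i * (C i)ᵀ) *ᵥ ν) = ((C i)ᵀ *ᵥ ν) ⬝ᵥ ((C i)ᵀ *ᵥ ν) := by
      intro i
      rw [← mulVec_mulVec, dot_transpose' (C i) ν ((C i)ᵀ *ᵥ ν)]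
    rw [hG, sum_mulVec', dot_sum]
    exact Finset.sum_congr rfl fun i _ => hterm i
  have hGpd : G.PosDef := by
    refine Matrix.PosDef.of_dotProduct_mulVec_pos ?_ ?_
    · show Gᴴ = G
      rw [conjTranspose_eq_transpose_of_trivial, hG, transpose_sum]
      exact Finset.sum_congr rfl fun i _ => by rw [transpose_mul, transpose_transpose]
    · intro ν hν
      rw [star_trivial, hGq]
      have hnn : (0:ℝ) ≤ ∑ i, ((C i)ᵀ *ᵥ ν) ⬝ᵥ ((C i)ᵀ *ᵥ ν) :=
        Finset.sum_nonneg fun i _ => qnn _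
      refine lt_of_le_of_ne hnn fun h => hν ?_
      apply hind
      intro i
      apply q_eq_zero
      have := (Finset.sum_eq_zero_iff_of_nonneg (fun i _ => qnn ((C i)ᵀ *ᵥ ν))).1 h.symm
        i (Finset.mem_univ i)
      exact this
  obtain ⟨cG, hcG0, hcG⟩ := posdef_lower hGpd
  -- upper bounds for the matrices M and K
  choose uM huM0 huM using fun i => quad_upper (M i)
  choose uK huK0 huK using fun i => quad_upper (K i)
  have hQd0 : ∀ i, 0 ≤ Qd i := fun i => le_trans (qnn (d i 0)) (hqd i 0)
  have hQw0 : ∀ i, 0 ≤ Qw i := fun i => le_trans (qnn (w i 0)) (hqw i 0)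
  -- bound on the constraint forces
  set QC : Fin S → ℝ := fun i => 2 * uM i * Qw i + 8 * uK i * Qd i with hQC
  have hqC : ∀ i n, ((C i)ᵀ *ᵥ μ n) ⬝ᵥ ((C i)ᵀ *ᵥ μ n) ≤ QC i := by
    intro i n
    have hform : (C i)ᵀ *ᵥ μ n
        = M i *ᵥ (w i n) + K i *ᵥ ((1 - γ) • d i n + γ • d i (n+1)) := (heq i n).symm
    set dd : Fin (nn i) → ℝ := (1 - γ) • d i n + γ • d i (n+1) with hdd
    have hqdd : dd ⬝ᵥ dd ≤ 4 * Qd i := by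
      have h1 : dd ⬝ᵥ dd ≤ 2 * (((1-γ) • d i n) ⬝ᵥ ((1-γ) • d i n))
          + 2 * ((γ • d i (n+1)) ⬝ᵥ (γ • d i (n+1))) := q_add_le _ _
      rw [q_smul, q_smul] at h1
      have h2 : (1-γ)^2 ≤ 1 := by nlinarith
      have h3 : γ^2 ≤ 1 := by nlinarith
      have h4 := hqd i n
      have h5 := hqd i (n+1)
      have h6 := qnn (d i n)
      have h7 := qnn (d i (n+1))
      nlinarith
    have h8 : ((C i)ᵀ *ᵥ μ n) ⬝ᵥ ((C i)ᵀ *ᵥ μ n)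
        ≤ 2 * ((M i *ᵥ w i n) ⬝ᵥ (M i *ᵥ w i n)) + 2 * ((K i *ᵥ dd) ⬝ᵥ (K i *ᵥ dd)) := by
      rw [hform]; exact q_add_le _ _
    have h9 := huM i (w i n)
    have h10 := huK i dd
    have h11 := hqw i n
    simp only [hQC]
    have h12 : uM i * (w i n ⬝ᵥ w i n) ≤ uM i * Qw i :=
      mul_le_mul_of_nonneg_left h11 (huM0 i)
    have h13 : uK i * (dd ⬝ᵥ dd) ≤ uK i * (4 * Qd i) :=
      mul_le_mul_of_nonneg_left hqdd (huK0 i)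
    linarith
  set Qmu : ℝ := (∑ i, QC i) / cG with hQmu
  have hqmu : ∀ n, (μ n) ⬝ᵥ (μ n) ≤ Qmu := by
    intro n
    have h1 : cG * ((μ n) ⬝ᵥ (μ n)) ≤ (μ n) ⬝ᵥ (G *ᵥ μ n) := hcG _
    have h2 : (μ n) ⬝ᵥ (G *ᵥ μ n) ≤ ∑ i, QC i := by
      rw [hGq]
      exact Finset.sum_le_sum fun i _ => hqC i n
    rw [hQmu, le_div_iff₀ hcG0]
    nlinarith
  have hQmu0 : 0 ≤ Qmu := le_trans (qnn (μ 0)) (hqmu 0)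
  -- final constant
  set C₀ : ℝ := 1 + (∑ i, (Real.sqrt (Qd i) + Real.sqrt (Qw i))) + Real.sqrt Qmu with hC₀
  have hsum_nn : 0 ≤ ∑ i : Fin S, (Real.sqrt (Qd i) + Real.sqrt (Qw i)) :=
    Finset.sum_nonneg fun i _ => add_nonneg (Real.sqrt_nonneg _) (Real.sqrt_nonneg _)
  have hC₀pos : 0 < C₀ := by
    rw [hC₀]
    have := Real.sqrt_nonneg Qmu
    linarith
  have hle : ∀ i : Fin S, Real.sqrt (Qd i) + Real.sqrt (Qw i)
      ≤ ∑ j : Fin S, (Real.sqrt (Qd j) + Real.sqrt (Qw j)) :=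
    fun i => Finset.single_le_sum
      (fun j _ => add_nonneg (Real.sqrt_nonneg _) (Real.sqrt_nonneg _)) (Finset.mem_univ i)
  have hd_bound : ∀ i n, euclidEnorm (d i n) ≤ C₀ := by
    intro i n
    have h1 : euclidEnorm (d i n) ≤ Real.sqrt (Qd i) := enorm_le_sqrt (hqd i n)
    have h2 := hle i
    have h3 := Real.sqrt_nonneg (Qw i)
    have h4 := Real.sqrt_nonneg Qmu
    rw [hC₀]
    linarith
  have hw_bound : ∀ i n, euclidEnorm (w i n) ≤ C₀ := by
    intro i n
    have h1 : euclidEnorm (w i n) ≤ Real.sqrt (Qw i) := enorm_le_sqrt (hqw i n)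
    have h2 := hle i
    have h3 := Real.sqrt_nonneg (Qd i)
    have h4 := Real.sqrt_nonneg Qmu
    rw [hC₀]
    linarith
  have hmu_bound : ∀ n, euclidEnorm (μ n) ≤ C₀ := by
    intro n
    have h1 : euclidEnorm (μ n) ≤ Real.sqrt Qmu := enorm_le_sqrt (hqmu n)
    rw [hC₀]
    linarith
  refine ⟨C₀, hC₀pos, fun i n => ⟨hd_bound i n, hw_bound i n⟩, hmu_bound, ?_, ?_⟩
  · intro i n
    exact enorm_interp (le_of_lt hγ₀) (by linarith) (by ring)
      (hw_bound i n) (hw_bound i (n+1))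
  · intro n
    exact enorm_interp (le_of_lt hγ₀) (by linarith) (by ring)
      (hmu_bound n) (hmu_bound (n+1))
end
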